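/- Let F be an algebraically closed field, n ≥ 2, m coprime to n, and A = C_m(a,b) an n×n Christoffel matrix over F with a ≠ b. Let k be the multiplicative order of m mod n, δ = a − b, σ = ma + (n−m)b. Then (A^k − δ^k I)(A − σI) = 0, so the minimal polynomial of A divides (x^k − δ^k)(x − σ). -/

import Mathlib

open Matrix Polynomial Finset

section aux
variable (n m : ℕ) (F : Type*) [Field F]

/-- all-ones matrix -/
def JJmat : Matrix (ZMod n) (ZMod n) F := Matrix.of fun _ _ => 1

/-- 0/1 pattern matrix -/
def PPmat : Matrix (ZMod n) (ZMod n) F :=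
  Matrix.of fun i j => if (i - (m : ZMod n) * j).val < m then 1 else 0

/-- Christoffel matrix with ZMod indices -/
def AAmat (a b : F) : Matrix (ZMod n) (ZMod n) F :=
  Matrix.of fun i j => if (i - (m : ZMod n) * j).val < m then a else b

variable [NeZero n]

lemma zmod_eq_cast_iff (x : ZMod n) (r : ℕ) (hr : r < n) : x = (r : ZMod n) ↔ x.val = r := by
  constructor
  · rintro rfl; exact ZMod.val_cast_of_lt hr
  · rintro h; rw [← h]; exact (ZMod.natCast_rightInverse x).symm

/-- sum over a ZMod variable of a val-<m indicator pattern -/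
lemma sum_val_lt (hmn : m ≤ n) (a b : F) :
    (∑ x : ZMod n, if x.val < m then a else b) = m * a + ((n - m : ℕ)) * b := by
  have : (∑ x : ZMod n, if x.val < m then a else b)
      = ∑ i ∈ Finset.range n, if i < m then a else b := by
    rw [← Fin.sum_univ_eq_sum_range (fun i => if i < m then a else b) n]
    apply Fintype.sum_bijective (fun x : ZMod n => (⟨x.val, x.val_lt⟩ : Fin n))
    · constructor
      · intro x y h; have := congrArg Fin.val h
        simpa using ZMod.val_injective n this
      · intro i; exact ⟨(i : ℕ), by ext; simp [ZMod.val_cast_of_lt i.isLt]⟩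
    · intro x; rfl
  rw [this, Finset.sum_ite]
  have h1 : Finset.filter (fun i => i < m) (Finset.range n) = Finset.range m := by
    ext i; simp; omega
  have h2 : Finset.filter (fun i => ¬ i < m) (Finset.range n) = Finset.Ico m n := by
    ext i; simp; omega
  rw [h1, h2]
  simp [Finset.sum_const, mul_comm, Nat.card_Ico]

end aux

section aux2
variable (n m : ℕ) [NeZero n] {F : Type*} [Field F]

lemma AA_decomp (a b : F) : AAmat n m F a b = (a - b) • PPmat n m F + b • JJmat n F := by
  ext i j
  simp only [AAmat, PPmat, JJmat, Matrix.add_apply, Matrix.smul_apply, Matrix.of_apply,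
    smul_eq_mul, mul_ite, mul_one, mul_zero]
  split <;> ring

lemma J_mul_A (hmn : m ≤ n) (a b : F) :
    JJmat n F * AAmat n m F a b = ((m : F) * a + ((n - m : ℕ)) * b) • JJmat n F := by
  ext i j
  simp only [JJmat, AAmat, Matrix.mul_apply, Matrix.smul_apply, Matrix.of_apply, one_mul,
    smul_eq_mul, mul_one]
  rw [← sum_val_lt n m F hmn a b]
  exact Fintype.sum_equiv (Equiv.subRight ((m : ZMod n) * j)) _ _ (fun l => rfl)

lemma J_mul_J : JJmat n F * JJmat n F = (n : F) • JJmat n F := by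
  ext i j
  simp [JJmat, Matrix.mul_apply, Finset.sum_const, ZMod.card]

lemma P_mul_J (hc : Nat.Coprime m n) (hmn : m ≤ n) :
    PPmat n m F * JJmat n F = (m : F) • JJmat n F := by
  ext i j
  simp only [PPmat, JJmat, Matrix.mul_apply, Matrix.smul_apply, Matrix.of_apply, mul_one,
    smul_eq_mul]
  have := sum_val_lt n m F hmn (1 : F) 0
  simp only [mul_one, mul_zero, add_zero] at this
  rw [← this]
  set u := ZMod.unitOfCoprime m hc with hu
  have hum : (u : ZMod n) = (m : ZMod n) := ZMod.coe_unitOfCoprime m hc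
  refine Fintype.sum_equiv ⟨fun l => i - (m : ZMod n) * l, fun x => (u⁻¹ : (ZMod n)ˣ) * (i - x),
    ?_, ?_⟩ _ _ (fun l => rfl)
  · intro l
    simp only [sub_sub_cancel, ← hum, ← mul_assoc]
    rw [Units.inv_mul, one_mul]
  · intro x
    simp only [← hum, ← mul_assoc]
    rw [Units.mul_inv, one_mul, sub_sub_cancel]

end aux2

section aux3
variable (n m : ℕ) [NeZero n] {F : Type*} [Field F]

lemma ind_sum (hmn : m ≤ n) (x : ZMod n) :
    (if x.val < m then (1:F) else 0) = ∑ r ∈ Finset.range m, if x = (r : ZMod n) then 1 else 0 := by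
  have : ∀ r ∈ Finset.range m, (if x = (r : ZMod n) then (1:F) else 0)
      = if x.val = r then 1 else 0 := by
    intro r hr
    rw [Finset.mem_range] at hr
    exact if_congr (zmod_eq_cast_iff n x r (lt_of_lt_of_le hr hmn)) rfl rfl
  rw [Finset.sum_congr rfl this, Finset.sum_ite_eq (Finset.range m) x.val (fun _ => (1:F))]
  simp

lemma PP_pow (hm : 1 ≤ m) (hmn : m ≤ n) (t : ℕ) (i j : ZMod n) :
    (PPmat n m F ^ t) i j
      = ∑ c ∈ Finset.range (m ^ t), if i = (m : ZMod n) ^ t * j + (c : ℕ) then 1 else 0 := by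
  induction t generalizing j with
  | zero =>
    simp only [pow_zero, Matrix.one_apply, Finset.sum_range_one, Nat.cast_zero, one_mul, add_zero]
  | succ t ih =>
    rw [pow_succ, Matrix.mul_apply]
    have hP : ∀ l j : ZMod n, PPmat n m F l j
        = ∑ r ∈ Finset.range m, if l = (m : ZMod n) * j + (r:ℕ) then (1:F) else 0 := by
      intro l j
      show (if (l - (m : ZMod n) * j).val < m then (1:F) else 0) = _
      rw [ind_sum n m hmn]
      exact Finset.sum_congr rfl fun r _ => if_congr sub_eq_iff_eq_add' rfl rfl
    calc ∑ l : ZMod n, (PPmat n m F ^ t) i l * PPmat n m F l j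
        = ∑ l : ZMod n, ∑ r ∈ Finset.range m,
            (if l = (m : ZMod n) * j + (r:ℕ) then (PPmat n m F ^ t) i l else 0) := by
          refine Finset.sum_congr rfl fun l _ => ?_
          rw [hP, Finset.mul_sum]
          refine Finset.sum_congr rfl fun r _ => ?_
          rw [mul_ite, mul_one, mul_zero]
      _ = ∑ r ∈ Finset.range m, ∑ l : ZMod n,
            (if l = (m : ZMod n) * j + (r:ℕ) then (PPmat n m F ^ t) i l else 0) :=
          Finset.sum_comm
      _ = ∑ r ∈ Finset.range m, (PPmat n m F ^ t) i ((m : ZMod n) * j + (r:ℕ)) := by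
          refine Finset.sum_congr rfl fun r _ => ?_
          rw [Finset.sum_ite_eq' Finset.univ ((m : ZMod n) * j + (r:ℕ))
            (fun l => (PPmat n m F ^ t) i l)]
          simp
      _ = ∑ r ∈ Finset.range m, ∑ c ∈ Finset.range (m ^ t),
            (if i = (m : ZMod n) ^ (t+1) * j + ((m ^ t * r + c : ℕ)) then (1:F) else 0) := by
          refine Finset.sum_congr rfl fun r _ => ?_
          rw [ih]
          refine Finset.sum_congr rfl fun c _ => ?_
          congr 1
          push_cast
          ring_nf
      _ = ∑ c' ∈ Finset.range (m ^ (t+1)),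
            (if i = (m : ZMod n) ^ (t+1) * j + (c' : ℕ) then (1:F) else 0) := by
          rw [← Finset.sum_product']
          refine Finset.sum_nbij' (fun rc => m ^ t * rc.1 + rc.2)
            (fun c' => (c' / m ^ t, c' % m ^ t)) ?_ ?_ ?_ ?_ ?_
          · rintro ⟨r, c⟩ h
            simp only [Finset.mem_product, Finset.mem_range] at h ⊢
            have : m ^ (t+1) = m ^ t * m := pow_succ m t
            nlinarith [h.1, h.2, Nat.one_le_iff_ne_zero.mp (Nat.one_le_pow t m hm)]
          · intro c' h
            simp only [Finset.mem_range] at h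
            simp only [Finset.mem_product, Finset.mem_range]
            have hpos : 0 < m ^ t := Nat.pow_pos hm
            constructor
            · rw [Nat.div_lt_iff_lt_mul hpos, mul_comm, ← pow_succ]; exact h
            · exact Nat.mod_lt _ hpos
          · rintro ⟨r, c⟩ h
            simp only [Finset.mem_product, Finset.mem_range] at h
            have hpos : 0 < m ^ t := Nat.pow_pos hm
            have h1 : (m ^ t * r + c) / m ^ t = r := by
              rw [Nat.mul_add_div hpos, Nat.div_eq_of_lt h.2, add_zero]
            have h2 : (m ^ t * r + c) % m ^ t = c := by
              rw [Nat.mul_add_mod, Nat.mod_eq_of_lt h.2]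
            simp [h1, h2]
          · intro c' _
            exact Nat.div_add_mod c' (m ^ t)
          · rintro ⟨r, c⟩ _; rfl

end aux3

section aux4
variable (n : ℕ) [NeZero n] {F : Type*} [Field F]

lemma block_count (x : ZMod n) (s : ℕ) :
    (∑ c ∈ Finset.range n, if x = ((s + c : ℕ) : ZMod n) then (1:F) else 0) = 1 := by
  have : ∀ c ∈ Finset.range n, (if x = ((s + c : ℕ) : ZMod n) then (1:F) else 0)
      = if (x - (s : ZMod n)).val = c then 1 else 0 := by
    intro c hc
    rw [Finset.mem_range] at hc
    refine if_congr ?_ rfl rfl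
    rw [← zmod_eq_cast_iff n _ c hc, sub_eq_iff_eq_add']
    push_cast
    rfl
  rw [Finset.sum_congr rfl this,
    Finset.sum_ite_eq (Finset.range n) (x - (s:ZMod n)).val (fun _ => (1:F))]
  simp [ZMod.val_lt]

lemma residue_count (x : ZMod n) (q : ℕ) :
    (∑ c ∈ Finset.range (q * n + 1), if x = (c : ZMod n) then (1:F) else 0)
      = q + if x = 0 then 1 else 0 := by
  induction q with
  | zero => rw [Nat.zero_mul, zero_add, Finset.sum_range_one]; norm_num
  | succ q ih =>
    have : (q + 1) * n + 1 = (q * n + 1) + n := by ring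
    rw [this, Finset.sum_range_add, ih]
    have : (∑ c ∈ Finset.range n, if x = ((q * n + 1 + c : ℕ) : ZMod n) then (1:F) else 0) = 1 :=
      block_count n x (q * n + 1)
    rw [this]
    push_cast
    ring

lemma PP_pow_k (m : ℕ) (hm : 1 ≤ m) (hmn : m ≤ n) (k q : ℕ)
    (hq : m ^ k = q * n + 1) (hone : (m : ZMod n) ^ k = 1) :
    PPmat n m F ^ k = 1 + (q : F) • JJmat n F := by
  ext i j
  rw [PP_pow n m hm hmn k i j, hq]
  simp only [hone, one_mul]
  have : ∀ c ∈ Finset.range (q * n + 1),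
      (if i = j + (c:ℕ) then (1:F) else 0) = if i - j = (c : ZMod n) then 1 else 0 := by
    intro c _
    exact if_congr (by rw [sub_eq_iff_eq_add']) rfl rfl
  rw [Finset.sum_congr rfl this, residue_count n (i - j) q]
  by_cases h : i = j <;>
    simp [h, Matrix.one_apply, JJmat, sub_eq_zero, Matrix.add_apply, Matrix.smul_apply] <;>
    first
      | ring
      | (simp [Ne.symm h, sub_eq_zero, h])

end aux4

section aux5
variable (n m : ℕ) [NeZero n] {F : Type*} [Field F]

lemma Pt_mul_J (hc : Nat.Coprime m n) (hmn : m ≤ n) (t : ℕ) :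
    PPmat n m F ^ t * JJmat n F = ((m : F) ^ t) • JJmat n F := by
  induction t with
  | zero => simp
  | succ t ih =>
    rw [pow_succ, Matrix.mul_assoc, P_mul_J n m hc hmn, Matrix.mul_smul, ih, smul_smul, pow_succ]
    ring_nf

lemma A_pow_decomp (hc : Nat.Coprime m n) (hmn : m ≤ n) (a b : F) (t : ℕ) :
    ∃ c : F, AAmat n m F a b ^ t = ((a - b) ^ t) • (PPmat n m F ^ t) + c • JJmat n F := by
  induction t with
  | zero => exact ⟨0, by simp⟩
  | succ t ih =>
    obtain ⟨c, hcc⟩ := ih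
    refine ⟨(a-b)^t * b * (m:F)^t + c * (a-b) * m + c * b * n, ?_⟩
    have h1 : JJmat n F * PPmat n m F = (m : F) • JJmat n F := by
      ext i j
      simp only [JJmat, PPmat, Matrix.mul_apply, Matrix.smul_apply, Matrix.of_apply, one_mul,
        smul_eq_mul, mul_one]
      have := sum_val_lt n m F hmn (1 : F) 0
      simp only [mul_one, mul_zero, add_zero] at this
      rw [← this]
      exact Fintype.sum_equiv (Equiv.subRight ((m : ZMod n) * j)) _ _ (fun l => rfl)
    have e1 : PPmat n m F ^ t * PPmat n m F = PPmat n m F ^ (t+1) := (pow_succ _ t).symm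
    rw [pow_succ, hcc, AA_decomp n m a b]
    simp only [Matrix.add_mul, Matrix.mul_add, Matrix.smul_mul, Matrix.mul_smul,
      e1, Pt_mul_J n m hc hmn, h1, J_mul_J, smul_smul]
    rw [_root_.pow_succ (a - b) t]
    module

lemma main_zmod (hm : 1 ≤ m) (hmn : m < n) (hc : Nat.Coprime m n) (a b : F) (k q : ℕ)
    (hq : m ^ k = q * n + 1) (hone : (m : ZMod n) ^ k = 1) :
    (AAmat n m F a b ^ k - ((a - b) ^ k) • 1) *
      (AAmat n m F a b - ((m : F) * a + ((n:F) - (m:F)) * b) • 1) = 0 := by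
  obtain ⟨c, hcc⟩ := A_pow_decomp n m hc hmn.le a b k
  rw [PP_pow_k n m hm hmn.le k q hq hone] at hcc
  have hd : AAmat n m F a b ^ k - ((a - b) ^ k) • 1
      = ((a - b) ^ k * q + c) • JJmat n F := by
    rw [hcc]; module
  have hσ : ((n:F) - (m:F)) = ((n - m : ℕ) : F) := by
    rw [Nat.cast_sub hmn.le]
  rw [hd, hσ, Matrix.smul_mul, mul_sub, Matrix.mul_smul, Matrix.mul_one,
    J_mul_A n m hmn.le a b, sub_self, smul_zero]

end aux5

def finZMod (n : ℕ) [NeZero n] : Fin n ≃ ZMod n where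
  toFun i := ((i : ℕ) : ZMod n)
  invFun x := ⟨x.val, x.val_lt⟩
  left_inv i := Fin.ext (ZMod.val_cast_of_lt i.isLt)
  right_inv x := ZMod.natCast_rightInverse x

/-- The `n × n` Christoffel matrix `C_m(a,b)`. -/
def christoffel (n m : ℕ) {R : Type*} (a b : R) : Matrix (Fin n) (Fin n) R :=
  Matrix.of fun i j =>
    if (((i : ℕ) : ZMod n) - (m : ZMod n) * ((j : ℕ) : ZMod n)).val < m then a else b

theorem christoffel_annihilating_poly (F : Type*) [Field F] [IsAlgClosed F]
    (n m : ℕ) (hn : 2 ≤ n) (hm : 1 ≤ m) (hm' : m < n) (hc : Nat.Coprime m n)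
    (a b : F) (hab : a ≠ b)
    (k : ℕ) (hk : k = orderOf (ZMod.unitOfCoprime m hc))
    (δ σ : F) (hδ : δ = a - b) (hσ : σ = (m : F) * a + ((n : F) - (m : F)) * b) :
    ((christoffel n m a b) ^ k - (δ ^ k) • (1 : Matrix (Fin n) (Fin n) F)) *
        ((christoffel n m a b) - σ • (1 : Matrix (Fin n) (Fin n) F)) = 0 ∧
      minpoly F (christoffel n m a b) ∣
        (Polynomial.X ^ k - Polynomial.C (δ ^ k)) * (Polynomial.X - Polynomial.C σ) := by
  haveI : NeZero n := ⟨by omega⟩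
  -- m^k ≡ 1 mod n
  have hone : (m : ZMod n) ^ k = 1 := by
    rw [← ZMod.coe_unitOfCoprime m hc, ← Units.val_pow_eq_pow_val, hk, pow_orderOf_eq_one,
      Units.val_one]
  have hmk1 : 1 ≤ m ^ k := Nat.one_le_pow k m hm
  have hdvd : n ∣ m ^ k - 1 := by
    rw [← Nat.modEq_iff_dvd' hmk1]
    have : ((1 : ℕ) : ZMod n) = ((m ^ k : ℕ) : ZMod n) := by push_cast; rw [hone]
    exact ((ZMod.natCast_eq_natCast_iff _ _ _).mp this)
  obtain ⟨q, hq'⟩ := hdvd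
  have hq : m ^ k = q * n + 1 := by rw [mul_comm]; omega
  set φ := Matrix.reindexAlgEquiv F F (finZMod n).symm with hφ
  have christ_eq : christoffel n m a b = φ (AAmat n m F a b) := by
    ext i j
    simp only [hφ, Matrix.reindexAlgEquiv_apply, Matrix.reindex_apply, Matrix.submatrix_apply,
      Equiv.symm_symm, christoffel, AAmat, Matrix.of_apply]
    rfl
  have h0 := main_zmod n m hm hm' hc a b k q hq hone
  have fact1 : (christoffel n m a b) ^ k - (δ ^ k) • (1 : Matrix (Fin n) (Fin n) F)
      = φ (AAmat n m F a b ^ k - ((a - b) ^ k) • 1) := by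
    rw [christ_eq, ← map_pow, hδ, map_sub, _root_.map_smul, _root_.map_one]
  have fact2 : (christoffel n m a b) - σ • (1 : Matrix (Fin n) (Fin n) F)
      = φ (AAmat n m F a b - ((m : F) * a + ((n:F) - (m:F)) * b) • 1) := by
    rw [christ_eq, hσ, map_sub, _root_.map_smul, _root_.map_one]
  have part1 : ((christoffel n m a b) ^ k - (δ ^ k) • (1 : Matrix (Fin n) (Fin n) F)) *
      ((christoffel n m a b) - σ • (1 : Matrix (Fin n) (Fin n) F)) = 0 := by
    rw [fact1, fact2, ← _root_.map_mul, h0, map_zero]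
  refine ⟨part1, ?_⟩
  apply minpoly.dvd
  have : (Polynomial.aeval (christoffel n m a b))
      ((Polynomial.X ^ k - Polynomial.C (δ ^ k)) * (Polynomial.X - Polynomial.C σ))
      = ((christoffel n m a b) ^ k - (δ ^ k) • (1 : Matrix (Fin n) (Fin n) F)) *
        ((christoffel n m a b) - σ • (1 : Matrix (Fin n) (Fin n) F)) := by
    simp only [_root_.map_mul, map_sub, map_pow, Polynomial.aeval_X, Polynomial.aeval_C,
      Algebra.algebraMap_eq_smul_one, _root_.smul_pow, one_pow]
  rw [this, part1]
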